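/- For any two vertex-labeled graphs G and H with uniform edit costs c_v = c_vl = c_e = 1: SLF(G,H) ≤ CLB(G,H) ≤ BranchLB(G,H) ≤ GED(G,H), where SLF(G,H) = max(|V(G)|,|V(H)|) − |L_V(G) ∩ L_V(H)| + ||E(G)| − |E(H)|| counts minimal label mismatches plus edge count difference, and BranchLB is the optimal assignment cost under ground cost c_branch = c_llb + c_dlb. -/

import Mathlib

open scoped Classical

/-- A labeled graph: finite vertex set (of natural-number names), finite loop-free edge set,
vertex and edge labeling functions. -/
structure LGraph (Lv Le : Type) where
  verts : Finset ℕ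
  edges : Finset (Sym2 ℕ)
  vl : ℕ → Lv
  el : Sym2 ℕ → Le

namespace LGraph

variable {Lv Le : Type}

/-- Well-formedness: edges are loop-free and their endpoints are vertices. -/
def WF (G : LGraph Lv Le) : Prop :=
  (∀ e ∈ G.edges, ¬ e.IsDiag) ∧ ∀ e ∈ G.edges, ∀ v ∈ e, v ∈ G.verts

/-- The degree of a vertex: the number of incident edges. -/
noncomputable def degree (G : LGraph Lv Le) (v : ℕ) : ℕ :=
  (G.edges.filter fun e => v ∈ e).card

/-- Edit operations: insert/delete/relabel a vertex, insert/delete/relabel an edge. -/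
inductive Op (Lv Le : Type) where
  | addV (v : ℕ) (l : Lv)
  | delV (v : ℕ)
  | relV (v : ℕ) (l : Lv)
  | addE (u v : ℕ) (l : Le)
  | delE (e : Sym2 ℕ)
  | relE (e : Sym2 ℕ) (l : Le)

/-- Applying an edit operation to a graph; `none` if the operation is invalid
(e.g. deleting a non-isolated vertex). -/
noncomputable def apply (o : Op Lv Le) (G : LGraph Lv Le) : Option (LGraph Lv Le) :=
  match o with
  | .addV v l => if v ∈ G.verts then none else
      some ⟨insert v G.verts, G.edges, Function.update G.vl v l, G.el⟩
  | .delV v => if v ∈ G.verts ∧ ∀ e ∈ G.edges, v ∉ e then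
      some ⟨G.verts.erase v, G.edges, G.vl, G.el⟩ else none
  | .relV v l => if v ∈ G.verts then
      some ⟨G.verts, G.edges, Function.update G.vl v l, G.el⟩ else none
  | .addE u v l => if u ∈ G.verts ∧ v ∈ G.verts ∧ u ≠ v ∧ s(u, v) ∉ G.edges then
      some ⟨G.verts, insert s(u, v) G.edges, G.vl, Function.update G.el s(u, v) l⟩ else none
  | .delE e => if e ∈ G.edges then
      some ⟨G.verts, G.edges.erase e, G.vl, G.el⟩ else none
  | .relE e l => if e ∈ G.edges then
      some ⟨G.verts, G.edges, G.vl, Function.update G.el e l⟩ else none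

/-- Applying a sequence of edit operations (an edit path). -/
noncomputable def applyList : List (Op Lv Le) → LGraph Lv Le → Option (LGraph Lv Le)
  | [], G => some G
  | o :: os, G => (apply o G).bind (applyList os)

/-- Cost of a single edit operation, with vertex insertion/deletion cost `cv`, vertex
relabeling cost `cvl`, edge insertion/deletion cost `ce` and edge relabeling cost `cel`. -/
def opCost (cv cvl ce cel : ℝ) : Op Lv Le → ℝ
  | .addV _ _ => cv
  | .delV _ => cv
  | .relV _ _ => cvl
  | .addE _ _ _ => ce
  | .delE _ => ce
  | .relE _ _ => cel

/-- Graph isomorphism: a bijection of the vertex sets preserving labels, adjacency and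
edge labels. -/
def Iso (G H : LGraph Lv Le) : Prop :=
  ∃ f : ℕ → ℕ, Set.BijOn f ↑G.verts ↑H.verts ∧
    (∀ v ∈ G.verts, H.vl (f v) = G.vl v) ∧
    (∀ u ∈ G.verts, ∀ v ∈ G.verts, (s(u, v) ∈ G.edges ↔ s(f u, f v) ∈ H.edges)) ∧
    (∀ u ∈ G.verts, ∀ v ∈ G.verts, s(u, v) ∈ G.edges → H.el s(f u, f v) = G.el s(u, v))

/-- The graph edit distance: the infimum of the total cost over all edit paths
transforming `G` into a graph isomorphic to `H`. -/
noncomputable def GED (cv cvl ce cel : ℝ) (G H : LGraph Lv Le) : ℝ :=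
  sInf {r | ∃ (ops : List (Op Lv Le)) (H' : LGraph Lv Le),
    applyList ops G = some H' ∧ Iso H' H ∧ r = (ops.map (opCost cv cvl ce cel)).sum}

/-- The vertex set of `G` padded with one dummy vertex (`Sum.inr`) for every vertex
of `H`, so that the padded vertex sets of `G` and `H` have equal cardinality. -/
abbrev PadV (G H : LGraph Lv Le) : Type := {x // x ∈ G.verts} ⊕ {x // x ∈ H.verts}

/-- Ground cost `c_llb`: 0 for equal labels or two dummies, `cvl` for distinct labels,
`cv` for matching a vertex with a dummy. -/
noncomputable def cllb (cv cvl : ℝ) (G H : LGraph Lv Le) : PadV G H → PadV H G → ℝ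
  | .inl u, .inl v => if G.vl u.1 = H.vl v.1 then 0 else cvl
  | .inl _, .inr _ => cv
  | .inr _, .inl _ => cv
  | .inr _, .inr _ => 0

/-- Degree of a padded vertex; dummies have degree 0. -/
noncomputable def padDeg (G H : LGraph Lv Le) : PadV G H → ℕ
  | .inl u => G.degree u.1
  | .inr _ => 0

/-- Ground cost `c_dlb(u,v) = (ce/2)·|δ(u) − δ(v)|`. -/
noncomputable def cdlb (ce : ℝ) (G H : LGraph Lv Le) (x : PadV G H) (y : PadV H G) : ℝ :=
  ce / 2 * |(padDeg G H x : ℝ) - (padDeg H G y : ℝ)|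

/-- Optimal assignment cost between the padded vertex sets of `G` and `H` under a ground
cost `c`: the minimum over all bijections `f` of `∑ x, c x (f x)`. -/
noncomputable def oaCost (G H : LGraph Lv Le) (c : PadV G H → PadV H G → ℝ) : ℝ :=
  sInf {r | ∃ f : PadV G H ≃ PadV H G, r = ∑ x, c x (f x)}

/-- The label lower bound. -/
noncomputable def LLB (cv cvl : ℝ) (G H : LGraph Lv Le) : ℝ :=
  oaCost G H (cllb cv cvl G H)

/-- The degree lower bound. -/
noncomputable def DLB (ce : ℝ) (G H : LGraph Lv Le) : ℝ :=
  oaCost G H (cdlb ce G H)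

/-- The combined lower bound `CLB = LLB + DLB`. -/
noncomputable def CLB (cv cvl ce : ℝ) (G H : LGraph Lv Le) : ℝ :=
  LLB cv cvl G H + DLB ce G H

end LGraph

namespace LGraph

/-- The simple label filter with unit costs:
`max(|V(G)|,|V(H)|) − |L_V(G) ∩ L_V(H)| + ||E(G)| − |E(H)||`, where `L_V` denotes the
multiset of vertex labels and `∩` the multiset intersection. -/
noncomputable def SLF {Lv Le : Type} (G H : LGraph Lv Le) : ℝ :=
  ((max G.verts.card H.verts.card : ℕ) : ℝ)
    - ((G.verts.val.map G.vl) ∩ (H.verts.val.map H.vl)).card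
    + |(G.edges.card : ℝ) - (H.edges.card : ℝ)|

/-- The branch lower bound: the optimal assignment cost under the single ground cost
`c_branch = c_llb + c_dlb` (with unit costs). -/
noncomputable def BranchLB {Lv Le : Type} (G H : LGraph Lv Le) : ℝ :=
  oaCost G H (fun x y => cllb 1 1 G H x y + cdlb 1 G H x y)
variable {Lv Le : Type}

lemma cllb_nonneg (G H : LGraph Lv Le) (x : PadV G H) (y : PadV H G) :
    0 ≤ cllb 1 1 G H x y := by
  rcases x with u | u <;> rcases y with v | v <;> simp [cllb] <;> positivity

lemma cdlb_nonneg (G H : LGraph Lv Le) (x : PadV G H) (y : PadV H G) :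
    0 ≤ cdlb 1 G H x y := by
  unfold cdlb; positivity

lemma cllb_le_one (G H : LGraph Lv Le) (x : PadV G H) (y : PadV H G) :
    cllb 1 1 G H x y ≤ 1 := by
  rcases x with u | u <;> rcases y with v | v <;> simp [cllb] <;> split <;> norm_num

lemma oaCost_le {G H : LGraph Lv Le} {c : PadV G H → PadV H G → ℝ}
    (hc : ∀ x y, 0 ≤ c x y) (f : PadV G H ≃ PadV H G) :
    oaCost G H c ≤ ∑ x, c x (f x) := by
  apply csInf_le
  · exact ⟨0, by rintro r ⟨g, rfl⟩; exact Finset.sum_nonneg fun x _ => hc x (g x)⟩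
  · exact ⟨f, rfl⟩

lemma le_oaCost {G H : LGraph Lv Le} {c : PadV G H → PadV H G → ℝ} {b : ℝ}
    (h : ∀ f : PadV G H ≃ PadV H G, b ≤ ∑ x, c x (f x)) : b ≤ oaCost G H c := by
  unfold oaCost
  refine le_csInf ?_ ?_
  · exact ⟨_, ⟨Equiv.sumComm _ _, rfl⟩⟩
  · rintro r ⟨g, rfl⟩; exact h g

lemma filter_mem_sym2_card {s : Finset ℕ} {e : Sym2 ℕ} (hd : ¬ e.IsDiag)
    (he : ∀ v ∈ e, v ∈ s) : (s.filter (fun v => v ∈ e)).card = 2 := by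
  induction e using Sym2.ind with
  | _ a b =>
    have hab : a ≠ b := by simpa using hd
    have hset : s.filter (fun v => v ∈ s(a,b)) = {a, b} := by
      ext v
      simp only [Finset.mem_filter, Sym2.mem_iff, Finset.mem_insert, Finset.mem_singleton]
      constructor
      · rintro ⟨-, h⟩; exact h
      · rintro (rfl | rfl)
        · exact ⟨he v (by simp), Or.inl rfl⟩
        · exact ⟨he v (by simp), Or.inr rfl⟩
    rw [hset, Finset.card_insert_of_notMem (by simp [hab]), Finset.card_singleton]

lemma sum_degree (G : LGraph Lv Le) (hG : G.WF) :
    ∑ v ∈ G.verts, G.degree v = 2 * G.edges.card := by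
  unfold degree
  simp only [Finset.card_filter]
  rw [Finset.sum_comm]
  rw [Finset.sum_congr rfl (fun e he => ?_), Finset.sum_const, smul_eq_mul, mul_comm]
  show (∑ v ∈ G.verts, if v ∈ e then 1 else 0) = 2
  rw [← Finset.card_filter]
  exact filter_mem_sym2_card (hG.1 e he) (hG.2 e he)

lemma sum_padDeg (G H : LGraph Lv Le) (hG : G.WF) :
    ∑ x : PadV G H, (padDeg G H x : ℝ) = 2 * G.edges.card := by
  rw [Fintype.sum_sum_type]
  have h2 : ∑ u : {x // x ∈ H.verts}, ((padDeg G H (Sum.inr u) : ℕ) : ℝ) = 0 := by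
    simp [padDeg]
  rw [h2, add_zero]
  have : ∀ u : {x // x ∈ G.verts}, ((padDeg G H (Sum.inl u) : ℕ) : ℝ) = (G.degree u.1 : ℝ) := by
    intro u; rfl
  rw [Finset.sum_congr rfl (fun u _ => this u)]
  rw [Finset.sum_coe_sort G.verts (fun v => (G.degree v : ℝ))]
  rw [← Nat.cast_sum, sum_degree G hG]
  push_cast; ring
lemma dlb_lower (G H : LGraph Lv Le) (hG : G.WF) (hH : H.WF) :
    |(G.edges.card : ℝ) - (H.edges.card : ℝ)| ≤ DLB 1 G H := by
  apply le_oaCost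
  intro f
  have h1 : ∑ x : PadV G H, ((padDeg G H x : ℝ) - (padDeg H G (f x) : ℝ))
      = 2 * G.edges.card - 2 * H.edges.card := by
    rw [Finset.sum_sub_distrib, sum_padDeg G H hG,
      Equiv.sum_comp f (fun y => (padDeg H G y : ℝ)), sum_padDeg H G hH]
  have h2 : |(2 : ℝ) * G.edges.card - 2 * H.edges.card|
      ≤ ∑ x : PadV G H, |(padDeg G H x : ℝ) - (padDeg H G (f x) : ℝ)| := by
    rw [← h1]; exact Finset.abs_sum_le_sum_abs _ _
  have h3 : ∑ x : PadV G H, cdlb 1 G H x (f x)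
      = (1/2) * ∑ x : PadV G H, |(padDeg G H x : ℝ) - (padDeg H G (f x) : ℝ)| := by
    rw [Finset.mul_sum]
    exact Finset.sum_congr rfl fun x _ => by unfold cdlb; ring
  have h4 : |(2 : ℝ) * G.edges.card - 2 * H.edges.card|
      = 2 * |(G.edges.card : ℝ) - (H.edges.card : ℝ)| := by
    have h5 : (2 : ℝ) * G.edges.card - 2 * H.edges.card
        = 2 * ((G.edges.card : ℝ) - H.edges.card) := by ring
    rw [h5, abs_mul, abs_two]
  rw [h3]; rw [h4] at h2; linarith

lemma cllb_zero_or_one (G H : LGraph Lv Le) (x : PadV G H) (y : PadV H G) :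
    cllb 1 1 G H x y = 0 ∨ cllb 1 1 G H x y = 1 := by
  rcases x with u | u <;> rcases y with v | v <;> simp [cllb]
  exact em _

lemma llb_lower (G H : LGraph Lv Le) :
    ((max G.verts.card H.verts.card : ℕ) : ℝ)
      - ((G.verts.val.map G.vl) ∩ (H.verts.val.map H.vl)).card ≤ LLB 1 1 G H := by
  apply le_oaCost
  intro f
  set n := G.verts.card with hn
  set m := H.verts.card with hm
  set I := ((G.verts.val.map G.vl) ∩ (H.verts.val.map H.vl)).card with hI
  have hcard : Fintype.card (PadV G H) = n + m := by
    simp [Fintype.card_sum, hn, hm]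
  -- the zero set
  set Z := Finset.univ.filter (fun x : PadV G H => cllb 1 1 G H x (f x) = 0) with hZ
  set W := Finset.univ.filter (fun x : PadV G H => ¬ cllb 1 1 G H x (f x) = 0) with hW
  have hZW : Z.card + W.card = n + m := by
    rw [hZ, hW, Finset.card_filter_add_card_filter_not, Finset.card_univ, hcard]
  -- sum is at least card W
  have hsum : (W.card : ℝ) ≤ ∑ x, cllb 1 1 G H x (f x) := by
    calc (W.card : ℝ) = ∑ x ∈ W, (1:ℝ) := by simp
    _ ≤ ∑ x ∈ W, cllb 1 1 G H x (f x) := by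
        apply Finset.sum_le_sum
        intro x hx
        rw [hW, Finset.mem_filter] at hx
        rcases cllb_zero_or_one G H x (f x) with h | h
        · exact absurd h hx.2
        · rw [h]
    _ ≤ ∑ x, cllb 1 1 G H x (f x) :=
        Finset.sum_le_sum_of_subset_of_nonneg (Finset.filter_subset _ _)
          (fun x _ _ => cllb_nonneg G H x (f x))
  -- split the zero set
  set Z1 := Finset.univ.filter
    (fun x : PadV G H => x.isLeft ∧ (f x).isLeft ∧ cllb 1 1 G H x (f x) = 0) with hZ1
  set Z2 := Finset.univ.filter (fun x : PadV G H => x.isRight ∧ (f x).isRight) with hZ2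
  have hZsub : Z ⊆ Z1 ∪ Z2 := by
    intro x hx
    rw [hZ, Finset.mem_filter] at hx
    rw [Finset.mem_union, hZ1, hZ2]
    simp only [Finset.mem_filter, Finset.mem_univ, true_and]
    rcases x with u | u
    · rcases hfx : f (Sum.inl u) with v | v
      · refine Or.inl ⟨rfl, ?_, ?_⟩
        · try rw [hfx]
          rfl
        · try rw [hfx] at hx
          try rw [hfx]
          exact hx.2
      · try rw [hfx] at hx
        simp [cllb] at hx
    · rcases hfx : f (Sum.inr u) with v | v
      · try rw [hfx] at hx
        simp [cllb] at hx
      · refine Or.inr ⟨rfl, ?_⟩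
        try rw [hfx]
        rfl
  -- Z2 bounds
  have hZ2m : Z2.card ≤ m := by
    have hsub : Z2 ⊆ Finset.univ.image (Sum.inr : {x // x ∈ H.verts} → PadV G H) := by
      intro x hx
      rw [hZ2, Finset.mem_filter] at hx
      obtain ⟨w, rfl⟩ := Sum.isRight_iff.1 hx.2.1
      exact Finset.mem_image.2 ⟨w, Finset.mem_univ _, rfl⟩
    calc Z2.card ≤ _ := Finset.card_le_card hsub
    _ ≤ Finset.univ.card := Finset.card_image_le
    _ = m := by simp [hm]
  have hZ2n : Z2.card ≤ n := by
    have hsub : Z2.image f ⊆ Finset.univ.image (Sum.inr : {x // x ∈ G.verts} → PadV H G) := by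
      intro y hy
      obtain ⟨x, hx, rfl⟩ := Finset.mem_image.1 hy
      rw [hZ2, Finset.mem_filter] at hx
      obtain ⟨w, hw⟩ := Sum.isRight_iff.1 hx.2.2
      rw [hw]
      exact Finset.mem_image.2 ⟨w, Finset.mem_univ _, rfl⟩
    calc Z2.card = (Z2.image f).card := (Finset.card_image_of_injective _ f.injective).symm
    _ ≤ _ := Finset.card_le_card hsub
    _ ≤ Finset.univ.card := Finset.card_image_le
    _ = n := by simp [hn]
  -- Z1 bound by the multiset intersection
  set keyG : PadV G H → ℕ := Sum.elim (fun u => u.1) (fun w => w.1) with hkeyG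
  set keyH : PadV H G → ℕ := Sum.elim (fun u => u.1) (fun w => w.1) with hkeyH
  have hZ1mem : ∀ x ∈ Z1, ∃ (u : {x // x ∈ G.verts}) (v : {x // x ∈ H.verts}),
      x = Sum.inl u ∧ f x = Sum.inl v ∧ G.vl u.1 = H.vl v.1 := by
    intro x hx
    rw [hZ1, Finset.mem_filter] at hx
    obtain ⟨u, hu⟩ := Sum.isLeft_iff.1 hx.2.1
    obtain ⟨v, hv⟩ := Sum.isLeft_iff.1 hx.2.2.1
    refine ⟨u, v, hu, hv, ?_⟩
    have hthis := hx.2.2.2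
    rw [hu] at hthis hv
    rw [hv] at hthis
    by_contra hne
    rw [show cllb 1 1 G H (Sum.inl u) (Sum.inl v) = if G.vl u.1 = H.vl v.1 then 0 else 1
      from rfl, if_neg hne] at hthis
    norm_num at hthis
  have hm1 : Z1.val.map keyG ≤ G.verts.val := by
    rw [Multiset.le_iff_subset]
    · intro a ha
      obtain ⟨x, hx, rfl⟩ := Multiset.mem_map.1 ha
      obtain ⟨u, v, rfl, -, -⟩ := hZ1mem x hx
      exact u.2
    · refine Multiset.Nodup.map_on ?_ Z1.nodup
      intro x hx y hy hxy
      obtain ⟨u, v, rfl, -, -⟩ := hZ1mem x hx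
      obtain ⟨u', v', rfl, -, -⟩ := hZ1mem y hy
      simp only [hkeyG, Sum.elim_inl] at hxy
      exact congrArg Sum.inl (Subtype.ext hxy)
  have hm2 : Z1.val.map (fun x => keyH (f x)) ≤ H.verts.val := by
    rw [Multiset.le_iff_subset]
    · intro a ha
      obtain ⟨x, hx, rfl⟩ := Multiset.mem_map.1 ha
      obtain ⟨u, v, -, hv, -⟩ := hZ1mem x hx
      rw [hv]
      exact v.2
    · refine Multiset.Nodup.map_on ?_ Z1.nodup
      intro x hx y hy hxy
      obtain ⟨u, v, -, hv, -⟩ := hZ1mem x hx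
      obtain ⟨u', v', -, hv', -⟩ := hZ1mem y hy
      rw [hv, hv'] at hxy
      simp only [hkeyH, Sum.elim_inl] at hxy
      have : f x = f y := by rw [hv, hv']; exact congrArg Sum.inl (Subtype.ext hxy)
      exact f.injective this
  have hZ1I : Z1.card ≤ I := by
    have hMG : Z1.val.map (fun x => G.vl (keyG x)) ≤ G.verts.val.map G.vl := by
      have : Z1.val.map (fun x => G.vl (keyG x)) = (Z1.val.map keyG).map G.vl := by
        rw [Multiset.map_map]; rfl
      rw [this]
      exact Multiset.map_le_map hm1
    have hMH : Z1.val.map (fun x => G.vl (keyG x)) ≤ H.verts.val.map H.vl := by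
      have hcongr : Z1.val.map (fun x => G.vl (keyG x))
          = Z1.val.map (fun x => H.vl (keyH (f x))) := by
        apply Multiset.map_congr rfl
        intro x hx
        obtain ⟨u, v, rfl, hv, heq⟩ := hZ1mem x hx
        rw [hv]
        simpa [hkeyG, hkeyH] using heq
      rw [hcongr, show Z1.val.map (fun x => H.vl (keyH (f x)))
        = (Z1.val.map (fun x => keyH (f x))).map H.vl by rw [Multiset.map_map]; rfl]
      exact Multiset.map_le_map hm2
    have := Multiset.card_le_card (Multiset.le_inter hMG hMH)
    rwa [Multiset.card_map] at this
  -- final arithmetic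
  have hZcard : Z.card ≤ Z1.card + Z2.card :=
    le_trans (Finset.card_le_card hZsub) (Finset.card_union_le _ _)
  have hc1 : ((Z.card : ℕ) : ℝ) + W.card = (n : ℝ) + m := by exact_mod_cast hZW
  have hc2 : ((Z.card : ℕ) : ℝ) ≤ (Z1.card : ℝ) + Z2.card := by exact_mod_cast hZcard
  have hc3 : ((Z1.card : ℕ) : ℝ) ≤ I := by exact_mod_cast hZ1I
  have hc4 : ((Z2.card : ℕ) : ℝ) ≤ n := by exact_mod_cast hZ2n
  have hc5 : ((Z2.card : ℕ) : ℝ) ≤ m := by exact_mod_cast hZ2m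
  rw [Nat.cast_max]
  rcases le_total (n : ℝ) (m : ℝ) with h | h
  · rw [max_eq_right h]; linarith
  · rw [max_eq_left h]; linarith

lemma clb_le_branch (G H : LGraph Lv Le) : CLB 1 1 1 G H ≤ BranchLB G H := by
  apply le_oaCost
  intro f
  rw [Finset.sum_add_distrib]
  exact add_le_add (oaCost_le (cllb_nonneg G H) f) (oaCost_le (cdlb_nonneg G H) f)
noncomputable def cB (G H : LGraph Lv Le) (x : PadV G H) (y : PadV H G) : ℝ :=
  cllb 1 1 G H x y + cdlb 1 G H x y

lemma branchLB_eq (G H : LGraph Lv Le) : BranchLB G H = oaCost G H (cB G H) := rfl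

lemma cB_nonneg (G H : LGraph Lv Le) (x : PadV G H) (y : PadV H G) : 0 ≤ cB G H x y :=
  add_nonneg (cllb_nonneg G H x y) (cdlb_nonneg G H x y)

lemma wf_apply {G G' : LGraph Lv Le} {o : Op Lv Le} (hG : G.WF) (h : apply o G = some G') :
    G'.WF := by
  obtain ⟨hd, hv⟩ := hG
  cases o with
  | addV v l =>
    rw [apply] at h
    split at h
    · cases h
    · cases h
      exact ⟨hd, fun e he w hw => Finset.mem_insert_of_mem (hv e he w hw)⟩
  | delV v =>
    rw [apply] at h
    split at h
    next hc =>
      cases h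
      refine ⟨hd, fun e he w hw => Finset.mem_erase.2 ⟨?_, hv e he w hw⟩⟩
      rintro rfl
      exact hc.2 e he hw
    next => cases h
  | relV v l =>
    rw [apply] at h
    split at h
    · cases h; exact ⟨hd, hv⟩
    · cases h
  | addE a b l =>
    rw [apply] at h
    split at h
    next hc =>
      cases h
      constructor
      · intro e he
        rcases Finset.mem_insert.1 he with rfl | he'
        · rw [Sym2.isDiag_iff_proj_eq]
          exact hc.2.2.1
        · exact hd e he'
      · intro e he w hw
        rcases Finset.mem_insert.1 he with rfl | he'
        · rcases Sym2.mem_iff.1 hw with rfl | rfl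
          · exact hc.1
          · exact hc.2.1
        · exact hv e he' w hw
    next => cases h
  | delE e =>
    rw [apply] at h
    split at h
    · cases h
      exact ⟨fun e' he' => hd e' (Finset.mem_of_mem_erase he'),
        fun e' he' => hv e' (Finset.mem_of_mem_erase he')⟩
    · cases h
  | relE e l =>
    rw [apply] at h
    split at h
    · cases h; exact ⟨hd, hv⟩
    · cases h

lemma wf_applyList : ∀ (ops : List (Op Lv Le)) (G G' : LGraph Lv Le), G.WF →
    applyList ops G = some G' → G'.WF
  | [], G, G', hG, h => by rw [applyList] at h; cases h; exact hG
  | o :: os, G, G', hG, h => by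
    rw [applyList] at h
    obtain ⟨G₁, h1, h2⟩ := Option.bind_eq_some_iff.1 h
    exact wf_applyList os G₁ G' (wf_apply hG h1) h2

lemma degree_not_mem {G : LGraph Lv Le} (hG : G.WF) {v : ℕ} (hv : v ∉ G.verts) :
    G.degree v = 0 := by
  unfold degree
  rw [Finset.card_eq_zero, Finset.filter_eq_empty_iff]
  intro e he hmem
  exact hv (hG.2 e he v hmem)

lemma card_filter_insert {α : Type*} [DecidableEq α] (s : Finset α) (a : α) (ha : a ∉ s)
    (p : α → Prop) [DecidablePred p] :
    ((insert a s).filter p).card = (s.filter p).card + (if p a then 1 else 0) := by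
  rw [Finset.filter_insert]
  split_ifs with h
  · rw [Finset.card_insert_of_notMem (fun hmem => ha (Finset.mem_of_mem_filter _ hmem))]
  · rw [add_zero]

lemma card_filter_erase' {α : Type*} [DecidableEq α] (s : Finset α) (a : α) (ha : a ∈ s)
    (p : α → Prop) [DecidablePred p] :
    (s.filter p).card = ((s.erase a).filter p).card + (if p a then 1 else 0) := by
  rw [Finset.filter_erase]
  split_ifs with h
  · have hmem : a ∈ s.filter p := Finset.mem_filter.2 ⟨ha, h⟩
    rw [Finset.card_erase_of_mem hmem]
    have := Finset.card_pos.2 ⟨a, hmem⟩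
    omega
  · rw [Finset.erase_eq_of_notMem (fun hmem => h (Finset.mem_filter.1 hmem).2), add_zero]

lemma sum_removeNone_le {α β : Type} [Fintype α] [Fintype β]
    (e : Option α ≃ Option β) (c : α → β → ℝ) (d : Option α → Option β → ℝ)
    (hss : ∀ x y, c x y = d (some x) (some y))
    (htri : ∀ x y, c x y ≤ 1 + d (some x) none + d none (some y))
    (hnn : 0 ≤ d none none) :
    ∑ x, c x (e.removeNone x) ≤ 1 + ∑ o, d o (e o) := by
  rw [Fintype.sum_option (fun o => d o (e o))]
  rcases he : e none with _ | z
  · -- e none = none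
    have hx : ∀ x : α, e (some x) = some (e.removeNone x) := by
      intro x
      rcases hex : e (some x) with _ | y
      · exact absurd (e.injective (hex.trans he.symm)) (by simp)
      · rw [Equiv.removeNone_some e ⟨y, hex⟩, hex]
    have : ∑ x, d (some x) (e (some x)) = ∑ x, c x (e.removeNone x) := by
      refine Finset.sum_congr rfl fun x _ => ?_
      rw [hx x, ← hss]
    rw [this]
    linarith
  · -- e none = some z
    have hsymm : e.symm none ≠ none := by
      intro hnone
      have h2 := congrArg e hnone
      rw [Equiv.apply_symm_apply, he] at h2
      cases h2
    obtain ⟨x₀, hx₀⟩ := Option.ne_none_iff_exists'.1 hsymm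
    have he0 : e (some x₀) = none := by
      rw [← hx₀, Equiv.apply_symm_apply]
    have hfx₀ : e.removeNone x₀ = z := by
      have := Equiv.removeNone_none e he0
      rw [he] at this
      exact Option.some_inj.1 this
    have hother : ∀ x : α, x ≠ x₀ → e (some x) = some (e.removeNone x) := by
      intro x hne
      rcases hex : e (some x) with _ | y
      · exact absurd (Option.some_inj.1 (e.injective (hex.trans he0.symm))) hne
      · rw [Equiv.removeNone_some e ⟨y, hex⟩, hex]
    rw [← Finset.sum_erase_add Finset.univ _ (Finset.mem_univ x₀),
      ← Finset.sum_erase_add Finset.univ (fun x => d (some x) (e (some x))) (Finset.mem_univ x₀)]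
    have hsum_eq : ∑ x ∈ Finset.univ.erase x₀, c x (e.removeNone x)
        = ∑ x ∈ Finset.univ.erase x₀, d (some x) (e (some x)) := by
      refine Finset.sum_congr rfl fun x hx => ?_
      rw [hother x (Finset.ne_of_mem_erase hx), ← hss]
    rw [hsum_eq, he0, hfx₀]
    have := htri x₀ z
    linarith

def eraseOptL {β : Type} (t s : Finset ℕ) (v : ℕ) (hv : v ∈ t)
    (hs : ∀ x, x ∈ s ↔ x ∈ t ∧ x ≠ v) :
    ({x // x ∈ t} ⊕ β) ≃ Option ({x // x ∈ s} ⊕ β) where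
  toFun x := match x with
    | .inl u => if h : u.1 = v then none else some (.inl ⟨u.1, (hs u.1).2 ⟨u.2, h⟩⟩)
    | .inr b => some (.inr b)
  invFun o := match o with
    | none => .inl ⟨v, hv⟩
    | some (.inl u) => .inl ⟨u.1, ((hs u.1).1 u.2).1⟩
    | some (.inr b) => .inr b
  left_inv := by
    rintro (u | b)
    · by_cases h : u.1 = v
      · simp only [h, dif_pos]
        exact congrArg Sum.inl (Subtype.ext h.symm)
      · simp [h]
    · rfl
  right_inv := by
    rintro (_ | (u | b))
    · simp
    · have h : u.1 ≠ v := ((hs u.1).1 u.2).2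
      simp [h]
    · rfl

def eraseOptR {β : Type} (t s : Finset ℕ) (v : ℕ) (hv : v ∈ t)
    (hs : ∀ x, x ∈ s ↔ x ∈ t ∧ x ≠ v) :
    (β ⊕ {x // x ∈ t}) ≃ Option (β ⊕ {x // x ∈ s}) where
  toFun x := match x with
    | .inr u => if h : u.1 = v then none else some (.inr ⟨u.1, (hs u.1).2 ⟨u.2, h⟩⟩)
    | .inl b => some (.inl b)
  invFun o := match o with
    | none => .inr ⟨v, hv⟩
    | some (.inr u) => .inr ⟨u.1, ((hs u.1).1 u.2).1⟩
    | some (.inl b) => .inl b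
  left_inv := by
    rintro (b | u)
    · rfl
    · by_cases h : u.1 = v
      · simp only [h, dif_pos]
        exact congrArg Sum.inr (Subtype.ext h.symm)
      · simp [h]
  right_inv := by
    rintro (_ | (b | u))
    · simp
    · rfl
    · have h : u.1 ≠ v := ((hs u.1).1 u.2).2
      simp [h]

@[simp] lemma eraseOptL_symm_none {β : Type} (t s : Finset ℕ) (v : ℕ) (hv : v ∈ t)
    (hs : ∀ x, x ∈ s ↔ x ∈ t ∧ x ≠ v) :
    (eraseOptL (β := β) t s v hv hs).symm none = Sum.inl ⟨v, hv⟩ := rfl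

@[simp] lemma eraseOptL_symm_some_inl {β : Type} (t s : Finset ℕ) (v : ℕ) (hv : v ∈ t)
    (hs : ∀ x, x ∈ s ↔ x ∈ t ∧ x ≠ v) (u : {x // x ∈ s}) :
    (eraseOptL (β := β) t s v hv hs).symm (some (Sum.inl u))
      = Sum.inl ⟨u.1, ((hs u.1).1 u.2).1⟩ := rfl

@[simp] lemma eraseOptL_symm_some_inr {β : Type} (t s : Finset ℕ) (v : ℕ) (hv : v ∈ t)
    (hs : ∀ x, x ∈ s ↔ x ∈ t ∧ x ≠ v) (b : β) :
    (eraseOptL (β := β) t s v hv hs).symm (some (Sum.inr b)) = Sum.inr b := rfl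

@[simp] lemma eraseOptR_symm_none {β : Type} (t s : Finset ℕ) (v : ℕ) (hv : v ∈ t)
    (hs : ∀ x, x ∈ s ↔ x ∈ t ∧ x ≠ v) :
    (eraseOptR (β := β) t s v hv hs).symm none = Sum.inr ⟨v, hv⟩ := rfl

@[simp] lemma eraseOptR_symm_some_inr {β : Type} (t s : Finset ℕ) (v : ℕ) (hv : v ∈ t)
    (hs : ∀ x, x ∈ s ↔ x ∈ t ∧ x ≠ v) (u : {x // x ∈ s}) :
    (eraseOptR (β := β) t s v hv hs).symm (some (Sum.inr u))
      = Sum.inr ⟨u.1, ((hs u.1).1 u.2).1⟩ := rfl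

@[simp] lemma eraseOptR_symm_some_inl {β : Type} (t s : Finset ℕ) (v : ℕ) (hv : v ∈ t)
    (hs : ∀ x, x ∈ s ↔ x ∈ t ∧ x ≠ v) (b : β) :
    (eraseOptR (β := β) t s v hv hs).symm (some (Sum.inl b)) = Sum.inl b := rfl
lemma half_abs_tri (a b c : ℝ) : 1/2*|a-c| ≤ 1/2*|b-c| + 1/2*|a-b| := by
  have := abs_sub_le a b c
  linarith

lemma cB_le_one_add (A B : LGraph Lv Le) (x : PadV A B) (y : PadV B A) :
    cB A B x y ≤ 1 + 1/2 * (padDeg A B x : ℝ) + 1/2 * (padDeg B A y : ℝ) := by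
  unfold cB cdlb
  have h1 := cllb_le_one A B x y
  have h2 : |(padDeg A B x : ℝ) - (padDeg B A y : ℝ)|
      ≤ (padDeg A B x : ℝ) + (padDeg B A y : ℝ) := by
    have hx : (0:ℝ) ≤ (padDeg A B x : ℝ) := Nat.cast_nonneg _
    have hy : (0:ℝ) ≤ (padDeg B A y : ℝ) := Nat.cast_nonneg _
    rcases abs_cases ((padDeg A B x : ℝ) - (padDeg B A y : ℝ)) with ⟨h, -⟩ | ⟨h, -⟩ <;> linarith
  linarith

lemma half_le_cB_right (A B : LGraph Lv Le) (x : PadV A B) (y : PadV B A)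
    (hy : padDeg B A y = 0) : 1/2 * (padDeg A B x : ℝ) ≤ cB A B x y := by
  unfold cB cdlb
  have h1 := cllb_nonneg A B x y
  rw [hy]
  rw [Nat.cast_zero, sub_zero, abs_of_nonneg (Nat.cast_nonneg _)]
  linarith

lemma half_le_cB_left (A B : LGraph Lv Le) (x : PadV A B) (y : PadV B A)
    (hx : padDeg A B x = 0) : 1/2 * (padDeg B A y : ℝ) ≤ cB A B x y := by
  unfold cB cdlb
  have h1 := cllb_nonneg A B x y
  rw [hx]
  rw [Nat.cast_zero, zero_sub, abs_neg, abs_of_nonneg (Nat.cast_nonneg _)]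
  linarith

lemma step_le {G G₁ K : LGraph Lv Le} (hG : G.WF) {o : Op Lv Le} (h : apply o G = some G₁)
    (g : PadV G₁ K ≃ PadV K G₁) :
    ∃ f : PadV G K ≃ PadV K G,
      ∑ x, cB G K x (f x) ≤ opCost 1 1 1 1 o + ∑ y, cB G₁ K y (g y) := by
  cases o with
  | relE e l =>
    rw [apply] at h
    split at h
    next he =>
      obtain rfl : (⟨G.verts, G.edges, G.vl, Function.update G.el e l⟩ : LGraph Lv Le) = G₁ :=
        Option.some.inj h
      refine ⟨g, ?_⟩
      have key : ∀ x : PadV G K,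
          cB G K x (g x)
            = cB ⟨G.verts, G.edges, G.vl, Function.update G.el e l⟩ K x (g x) := by
        intro x
        rcases x with u | w
        · rcases hgx : g (Sum.inl u) with w' | u' <;> rfl
        · rcases hgx : g (Sum.inr w) with w' | u' <;> rfl
      rw [Finset.sum_congr rfl (fun x _ => key x)]
      simp only [opCost]
      linarith
    next => cases h
  | relV v l =>
    rw [apply] at h
    split at h
    next hv =>
      obtain rfl : (⟨G.verts, G.edges, Function.update G.vl v l, G.el⟩ : LGraph Lv Le) = G₁ :=
        Option.some.inj h
      refine ⟨g, ?_⟩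
      have key : ∀ x : PadV G K,
          cB G K x (g x)
            ≤ cB ⟨G.verts, G.edges, Function.update G.vl v l, G.el⟩ K x (g x)
              + (if x = Sum.inl ⟨v, hv⟩ then 1 else 0) := by
        intro x
        rcases x with u | w
        · by_cases hu : u.1 = v
          · have hx0 : (Sum.inl u : PadV G K) = Sum.inl ⟨v, hv⟩ := by
              exact congrArg Sum.inl (Subtype.ext hu)
            rw [if_pos hx0]
            rcases hgx : g (Sum.inl u) with w' | u'
            · simp only [cB, cllb, cdlb, padDeg, degree]
              have h1 : (0:ℝ) ≤ if Function.update G.vl v l u.1 = K.vl w'.1 then 0 else 1 := by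
                split <;> norm_num
              have h2 : (if G.vl u.1 = K.vl w'.1 then (0:ℝ) else 1) ≤ 1 := by
                split <;> norm_num
              linarith
            · simp only [cB, cllb, cdlb, padDeg, degree]
              linarith
          · have hx0 : (Sum.inl u : PadV G K) ≠ Sum.inl ⟨v, hv⟩ := by
              intro hc
              exact hu (congrArg Subtype.val (Sum.inl.inj hc))
            rw [if_neg hx0, add_zero]
            rcases hgx : g (Sum.inl u) with w' | u'
            · simp only [cB, cllb, cdlb, padDeg, degree, Function.update_of_ne hu]
              exact le_rfl
            · simp only [cB, cllb, cdlb, padDeg, degree]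
              exact le_rfl
        · have hx0 : (Sum.inr w : PadV G K) ≠ Sum.inl ⟨v, hv⟩ := by simp
          rw [if_neg hx0, add_zero]
          rcases hgx : g (Sum.inr w) with w' | u'
          · simp only [cB, cllb, cdlb, padDeg, degree]
            exact le_rfl
          · simp only [cB, cllb, cdlb, padDeg, degree]
            exact le_rfl
      calc ∑ x : PadV G K, cB G K x (g x)
          ≤ ∑ x : PadV G K, (cB ⟨G.verts, G.edges, Function.update G.vl v l, G.el⟩ K x (g x)
              + (if x = Sum.inl ⟨v, hv⟩ then 1 else 0)) :=
            Finset.sum_le_sum (fun x _ => key x)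
        _ = (∑ x : PadV G K, cB ⟨G.verts, G.edges, Function.update G.vl v l, G.el⟩ K x (g x))
              + ∑ x : PadV G K, (if x = Sum.inl ⟨v, hv⟩ then (1:ℝ) else 0) :=
            Finset.sum_add_distrib
        _ ≤ opCost 1 1 1 1 (Op.relV v l)
              + ∑ y, cB ⟨G.verts, G.edges, Function.update G.vl v l, G.el⟩ K y (g y) := by
            rw [Finset.sum_ite_eq' Finset.univ (Sum.inl ⟨v, hv⟩ : PadV G K) (fun _ => (1:ℝ))]
            simp only [Finset.mem_univ, if_pos, opCost]
            linarith
    next => cases h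
  | delE e =>
    rw [apply] at h
    split at h
    next he =>
      obtain rfl : (⟨G.verts, G.edges.erase e, G.vl, G.el⟩ : LGraph Lv Le) = G₁ :=
        Option.some.inj h
      refine ⟨g, ?_⟩
      have hdeg : ∀ w : ℕ, ((G.degree w : ℕ) : ℝ)
          = ((degree ⟨G.verts, G.edges.erase e, G.vl, G.el⟩ w : ℕ) : ℝ)
            + (if w ∈ e then 1 else 0) := by
        intro w
        unfold degree
        rw [card_filter_erase' G.edges e he (fun e' => w ∈ e')]
        push_cast
        ring
      have key : ∀ x : PadV G K,
          cB G K x (g x)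
            ≤ cB ⟨G.verts, G.edges.erase e, G.vl, G.el⟩ K x (g x)
              + 1/2 * |((padDeg G K x : ℕ) : ℝ)
                  - ((padDeg ⟨G.verts, G.edges.erase e, G.vl, G.el⟩ K x : ℕ) : ℝ)| := by
        intro x
        rcases x with u | w
        · rcases hgx : g (Sum.inl u) with w' | u'
          · simp only [cB, cllb, cdlb, padDeg, degree, Nat.cast_zero]
            linarith [half_abs_tri ((G.edges.filter (fun e' => u.1 ∈ e')).card : ℝ)
              (((G.edges.erase e).filter (fun e' => u.1 ∈ e')).card : ℝ)
              ((K.edges.filter (fun e' => w'.1 ∈ e')).card : ℝ)]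
          · simp only [cB, cllb, cdlb, padDeg, degree, Nat.cast_zero]
            linarith [half_abs_tri ((G.edges.filter (fun e' => u.1 ∈ e')).card : ℝ)
              (((G.edges.erase e).filter (fun e' => u.1 ∈ e')).card : ℝ) 0]
        · rcases hgx : g (Sum.inr w) with w' | u' <;>
          · simp only [cB, cllb, cdlb, padDeg, degree, Nat.cast_zero]
            simp
      have hex : ∑ x : PadV G K, 1/2 * |((padDeg G K x : ℕ) : ℝ)
          - ((padDeg ⟨G.verts, G.edges.erase e, G.vl, G.el⟩ K x : ℕ) : ℝ)| = 1 := by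
        rw [Fintype.sum_sum_type]
        have hr : ∑ w : {x // x ∈ K.verts}, 1/2 * |((padDeg G K (Sum.inr w) : ℕ) : ℝ)
            - ((padDeg ⟨G.verts, G.edges.erase e, G.vl, G.el⟩ K (Sum.inr w) : ℕ) : ℝ)| = 0 := by
          simp [padDeg]
        have hl : ∀ u : {x // x ∈ G.verts}, 1/2 * |((padDeg G K (Sum.inl u) : ℕ) : ℝ)
            - ((padDeg ⟨G.verts, G.edges.erase e, G.vl, G.el⟩ K (Sum.inl u) : ℕ) : ℝ)|
            = 1/2 * (if u.1 ∈ e then 1 else 0) := by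
          intro u
          have h1 := hdeg u.1
          simp only [padDeg]
          rw [show ((G.degree u.1 : ℕ) : ℝ)
            - ((degree ⟨G.verts, G.edges.erase e, G.vl, G.el⟩ u.1 : ℕ) : ℝ)
            = (if u.1 ∈ e then 1 else 0) from by linarith]
          rw [abs_of_nonneg (by split <;> norm_num)]
        rw [hr, add_zero, Finset.sum_congr rfl (fun u _ => hl u), ← Finset.mul_sum]
        rw [Finset.sum_coe_sort G.verts (fun w => if w ∈ e then (1:ℝ) else 0)]
        rw [Finset.sum_boole]
        rw [show (Finset.filter (fun w => w ∈ e) G.verts).card = 2 from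
          filter_mem_sym2_card (hG.1 e he) (hG.2 e he)]
        norm_num
      calc ∑ x : PadV G K, cB G K x (g x)
          ≤ ∑ x : PadV G K, (cB ⟨G.verts, G.edges.erase e, G.vl, G.el⟩ K x (g x)
              + 1/2 * |((padDeg G K x : ℕ) : ℝ)
                  - ((padDeg ⟨G.verts, G.edges.erase e, G.vl, G.el⟩ K x : ℕ) : ℝ)|) :=
            Finset.sum_le_sum (fun x _ => key x)
        _ = (∑ x : PadV G K, cB ⟨G.verts, G.edges.erase e, G.vl, G.el⟩ K x (g x))
              + ∑ x : PadV G K, 1/2 * |((padDeg G K x : ℕ) : ℝ)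
                  - ((padDeg ⟨G.verts, G.edges.erase e, G.vl, G.el⟩ K x : ℕ) : ℝ)| :=
            Finset.sum_add_distrib
        _ ≤ opCost 1 1 1 1 (Op.delE e)
              + ∑ y, cB ⟨G.verts, G.edges.erase e, G.vl, G.el⟩ K y (g y) := by
            rw [hex]
            simp only [opCost]
            linarith
    next => cases h
  | addE a b l =>
    rw [apply] at h
    split at h
    next hc =>
      obtain rfl : (⟨G.verts, insert s(a, b) G.edges, G.vl,
          Function.update G.el s(a, b) l⟩ : LGraph Lv Le) = G₁ := Option.some.inj h
      obtain ⟨ha, hb, hab, hnotin⟩ := hc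
      refine ⟨g, ?_⟩
      have hdeg : ∀ w : ℕ, ((degree ⟨G.verts, insert s(a, b) G.edges, G.vl,
          Function.update G.el s(a, b) l⟩ w : ℕ) : ℝ)
          = ((G.degree w : ℕ) : ℝ) + (if w ∈ s(a, b) then 1 else 0) := by
        intro w
        unfold degree
        rw [show (⟨G.verts, insert s(a, b) G.edges, G.vl,
          Function.update G.el s(a, b) l⟩ : LGraph Lv Le).edges = insert s(a, b) G.edges from rfl]
        rw [card_filter_insert G.edges s(a, b) hnotin (fun e' => w ∈ e')]
        push_cast
        ring
      have key : ∀ x : PadV G K,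
          cB G K x (g x)
            ≤ cB ⟨G.verts, insert s(a, b) G.edges, G.vl,
                Function.update G.el s(a, b) l⟩ K x (g x)
              + 1/2 * |((padDeg G K x : ℕ) : ℝ)
                  - ((padDeg ⟨G.verts, insert s(a, b) G.edges, G.vl,
                      Function.update G.el s(a, b) l⟩ K x : ℕ) : ℝ)| := by
        intro x
        rcases x with u | w
        · rcases hgx : g (Sum.inl u) with w' | u'
          · simp only [cB, cllb, cdlb, padDeg, degree, Nat.cast_zero]
            linarith [half_abs_tri ((G.edges.filter (fun e' => u.1 ∈ e')).card : ℝ)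
              (((insert s(a, b) G.edges).filter (fun e' => u.1 ∈ e')).card : ℝ)
              ((K.edges.filter (fun e' => w'.1 ∈ e')).card : ℝ)]
          · simp only [cB, cllb, cdlb, padDeg, degree, Nat.cast_zero]
            linarith [half_abs_tri ((G.edges.filter (fun e' => u.1 ∈ e')).card : ℝ)
              (((insert s(a, b) G.edges).filter (fun e' => u.1 ∈ e')).card : ℝ) 0]
        · rcases hgx : g (Sum.inr w) with w' | u' <;>
          · simp only [cB, cllb, cdlb, padDeg, degree, Nat.cast_zero]
            simp
      have hex : ∑ x : PadV G K, 1/2 * |((padDeg G K x : ℕ) : ℝ)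
          - ((padDeg ⟨G.verts, insert s(a, b) G.edges, G.vl,
              Function.update G.el s(a, b) l⟩ K x : ℕ) : ℝ)| = 1 := by
        rw [Fintype.sum_sum_type]
        have hr : ∑ w : {x // x ∈ K.verts}, 1/2 * |((padDeg G K (Sum.inr w) : ℕ) : ℝ)
            - ((padDeg ⟨G.verts, insert s(a, b) G.edges, G.vl,
                Function.update G.el s(a, b) l⟩ K (Sum.inr w) : ℕ) : ℝ)| = 0 := by
          simp [padDeg]
        have hl : ∀ u : {x // x ∈ G.verts}, 1/2 * |((padDeg G K (Sum.inl u) : ℕ) : ℝ)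
            - ((padDeg ⟨G.verts, insert s(a, b) G.edges, G.vl,
                Function.update G.el s(a, b) l⟩ K (Sum.inl u) : ℕ) : ℝ)|
            = 1/2 * (if u.1 ∈ s(a, b) then 1 else 0) := by
          intro u
          have h1 := hdeg u.1
          simp only [padDeg]
          rw [show ((G.degree u.1 : ℕ) : ℝ)
            - ((degree ⟨G.verts, insert s(a, b) G.edges, G.vl,
                Function.update G.el s(a, b) l⟩ u.1 : ℕ) : ℝ)
            = -(if u.1 ∈ s(a, b) then 1 else 0) from by linarith]
          rw [abs_neg, abs_of_nonneg (by split <;> norm_num)]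
        rw [hr, add_zero, Finset.sum_congr rfl (fun u _ => hl u), ← Finset.mul_sum]
        rw [Finset.sum_coe_sort G.verts (fun w => if w ∈ s(a, b) then (1:ℝ) else 0)]
        rw [Finset.sum_boole]
        have hfil : (Finset.filter (fun w => w ∈ s(a, b)) G.verts).card = 2 := by
          apply filter_mem_sym2_card
          · rw [Sym2.isDiag_iff_proj_eq]
            exact hab
          · intro w hw
            rcases Sym2.mem_iff.1 hw with rfl | rfl
            · exact ha
            · exact hb
        rw [hfil]
        norm_num
      calc ∑ x : PadV G K, cB G K x (g x)
          ≤ ∑ x : PadV G K, (cB ⟨G.verts, insert s(a, b) G.edges, G.vl,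
              Function.update G.el s(a, b) l⟩ K x (g x)
              + 1/2 * |((padDeg G K x : ℕ) : ℝ)
                  - ((padDeg ⟨G.verts, insert s(a, b) G.edges, G.vl,
                      Function.update G.el s(a, b) l⟩ K x : ℕ) : ℝ)|) :=
            Finset.sum_le_sum (fun x _ => key x)
        _ = (∑ x : PadV G K, cB ⟨G.verts, insert s(a, b) G.edges, G.vl,
              Function.update G.el s(a, b) l⟩ K x (g x))
              + ∑ x : PadV G K, 1/2 * |((padDeg G K x : ℕ) : ℝ)
                  - ((padDeg ⟨G.verts, insert s(a, b) G.edges, G.vl,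
                      Function.update G.el s(a, b) l⟩ K x : ℕ) : ℝ)| :=
            Finset.sum_add_distrib
        _ ≤ opCost 1 1 1 1 (Op.addE a b l)
              + ∑ y, cB ⟨G.verts, insert s(a, b) G.edges, G.vl,
                  Function.update G.el s(a, b) l⟩ K y (g y) := by
            rw [hex]
            simp only [opCost]
            linarith
    next => cases h
  | delV v =>
    rw [apply] at h
    split at h
    next hc =>
      obtain rfl : (⟨G.verts.erase v, G.edges, G.vl, G.el⟩ : LGraph Lv Le) = G₁ :=
        Option.some.inj h
      obtain ⟨hv, hiso⟩ := hc
      have hs : ∀ x, x ∈ G.verts.erase v ↔ x ∈ G.verts ∧ x ≠ v := by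
        intro x
        rw [Finset.mem_erase]
        tauto
      set eL := eraseOptL (β := {x // x ∈ K.verts}) G.verts (G.verts.erase v) v hv hs with heL
      set eR := eraseOptR (β := {x // x ∈ K.verts}) G.verts (G.verts.erase v) v hv hs with heR
      refine ⟨eL.trans ((Equiv.optionCongr g).trans eR.symm), ?_⟩
      have hdegv : G.degree v = 0 := by
        unfold degree
        rw [Finset.card_eq_zero, Finset.filter_eq_empty_iff]
        exact fun e he => hiso e he
      rw [← Equiv.sum_comp eL.symm
        (fun x => cB G K x ((eL.trans ((Equiv.optionCongr g).trans eR.symm)) x))]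
      have happ : ∀ o : Option (PadV (⟨G.verts.erase v, G.edges, G.vl, G.el⟩ : LGraph Lv Le) K),
          (eL.trans ((Equiv.optionCongr g).trans eR.symm)) (eL.symm o)
            = eR.symm (Option.map g o) := by
        intro o
        simp [Equiv.optionCongr]
      rw [Finset.sum_congr rfl (fun o _ => by rw [happ o])]
      rw [Fintype.sum_option (fun o => cB G K (eL.symm o) (eR.symm (Option.map g o)))]
      have hnone : cB G K (eL.symm none) (eR.symm (Option.map g none)) = 1 := by
        rw [heL, heR]
        show cB G K (Sum.inl ⟨v, hv⟩) (Sum.inr ⟨v, hv⟩) = 1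
        simp [cB, cllb, cdlb, padDeg, hdegv]
      have hsome : ∀ y : PadV (⟨G.verts.erase v, G.edges, G.vl, G.el⟩ : LGraph Lv Le) K,
          cB G K (eL.symm (some y)) (eR.symm (Option.map g (some y)))
            = cB ⟨G.verts.erase v, G.edges, G.vl, G.el⟩ K y (g y) := by
        intro y
        rw [heL, heR]
        rcases y with u | w
        · rw [Option.map_some]
          rcases hgy : g (Sum.inl u) with w' | u' <;> rfl
        · rw [Option.map_some]
          rcases hgy : g (Sum.inr w) with w' | u' <;> rfl
      rw [hnone, Finset.sum_congr rfl (fun y _ => hsome y)]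
      simp only [opCost]
      linarith
    next => cases h
  | addV v l =>
    rw [apply] at h
    split at h
    next => cases h
    next hv =>
      obtain rfl : (⟨insert v G.verts, G.edges, Function.update G.vl v l, G.el⟩
          : LGraph Lv Le) = G₁ := Option.some.inj h
      have hs : ∀ x, x ∈ G.verts ↔ x ∈ insert v G.verts ∧ x ≠ v := by
        intro x
        rw [Finset.mem_insert]
        constructor
        · intro hx
          exact ⟨Or.inr hx, fun hxv => hv (hxv ▸ hx)⟩
        · rintro ⟨h1 | h1, h2⟩
          · exact absurd h1 h2
          · exact h1
      have hvmem : v ∈ insert v G.verts := Finset.mem_insert_self v G.verts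
      set eL := eraseOptL (β := {x // x ∈ K.verts}) (insert v G.verts) G.verts v hvmem hs
        with heL
      set eR := eraseOptR (β := {x // x ∈ K.verts}) (insert v G.verts) G.verts v hvmem hs
        with heR
      set gOpt := (eL.symm.trans g).trans eR with hgOpt
      refine ⟨gOpt.removeNone, ?_⟩
      have hdegv : degree (⟨insert v G.verts, G.edges, Function.update G.vl v l, G.el⟩
          : LGraph Lv Le) v = 0 := by
        unfold degree
        rw [Finset.card_eq_zero, Finset.filter_eq_empty_iff]
        intro e he hmem
        exact hv (hG.2 e he v hmem)
      have hmain := sum_removeNone_le gOpt (cB G K)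
        (fun o p => cB ⟨insert v G.verts, G.edges, Function.update G.vl v l, G.el⟩ K
          (eL.symm o) (eR.symm p)) ?_ ?_ (cB_nonneg _ _ _ _)
      · have hsum2 : ∑ o, cB ⟨insert v G.verts, G.edges, Function.update G.vl v l, G.el⟩ K
            (eL.symm o) (eR.symm (gOpt o))
            = ∑ y, cB ⟨insert v G.verts, G.edges, Function.update G.vl v l, G.el⟩ K y (g y) := by
          rw [← Equiv.sum_comp eL.symm
            (fun y => cB ⟨insert v G.verts, G.edges, Function.update G.vl v l, G.el⟩ K y (g y))]
          refine Finset.sum_congr rfl (fun o _ => ?_)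
          have : eR.symm (gOpt o) = g (eL.symm o) := by
            rw [hgOpt]
            simp
          rw [this]
        rw [hsum2] at hmain
        simp only [opCost]
        exact hmain
      · -- hss
        intro x y
        rw [heL, heR]
        rcases x with u | w
        · have hune : u.1 ≠ v := fun hh => hv (hh ▸ u.2)
          rcases y with w' | u'
          · simp only [eraseOptL_symm_some_inl, eraseOptR_symm_some_inl]
            simp only [cB, cllb, cdlb, padDeg, degree, Function.update_of_ne hune]
          · simp only [eraseOptL_symm_some_inl, eraseOptR_symm_some_inr]
            simp only [cB, cllb, cdlb, padDeg, degree, Function.update_of_ne hune]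
        · rcases y with w' | u'
          · rfl
          · rfl
      · -- htri
        intro x y
        rw [heL, heR]
        have hb1 : 1/2 * ((padDeg G K x : ℕ) : ℝ)
            ≤ cB ⟨insert v G.verts, G.edges, Function.update G.vl v l, G.el⟩ K
              ((eraseOptL (insert v G.verts) G.verts v hvmem hs).symm (some x))
              ((eraseOptR (insert v G.verts) G.verts v hvmem hs).symm none) := by
          have hdx : padDeg (⟨insert v G.verts, G.edges, Function.update G.vl v l, G.el⟩
              : LGraph Lv Le) K
              ((eraseOptL (insert v G.verts) G.verts v hvmem hs).symm (some x))
              = padDeg G K x := by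
            rcases x with u | w <;> rfl
          rw [← hdx]
          apply half_le_cB_right
          rfl
        have hb2 : 1/2 * ((padDeg K G y : ℕ) : ℝ)
            ≤ cB ⟨insert v G.verts, G.edges, Function.update G.vl v l, G.el⟩ K
              ((eraseOptL (insert v G.verts) G.verts v hvmem hs).symm none)
              ((eraseOptR (insert v G.verts) G.verts v hvmem hs).symm (some y)) := by
          have hdy : padDeg K (⟨insert v G.verts, G.edges, Function.update G.vl v l, G.el⟩
              : LGraph Lv Le)
              ((eraseOptR (insert v G.verts) G.verts v hvmem hs).symm (some y))
              = padDeg K G y := by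
            rcases y with w' | u' <;> rfl
          rw [← hdy]
          exact half_le_cB_left _ _ _ _ hdegv
        have := cB_le_one_add G K x y
        linarith
lemma branch_le_step {G G₁ K : LGraph Lv Le} (hG : G.WF) {o : Op Lv Le}
    (h : apply o G = some G₁) :
    BranchLB G K ≤ opCost 1 1 1 1 o + BranchLB G₁ K := by
  rw [branchLB_eq, branchLB_eq]
  have h1 : oaCost G K (cB G K) - opCost 1 1 1 1 o ≤ oaCost G₁ K (cB G₁ K) := by
    unfold oaCost
    refine le_csInf ⟨_, ⟨Equiv.sumComm _ _, rfl⟩⟩ ?_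
    rintro r ⟨g, rfl⟩
    obtain ⟨f, hf⟩ := step_le hG h g
    have h2 : oaCost G K (cB G K) ≤ ∑ x, cB G K x (f x) := oaCost_le (cB_nonneg G K) f
    unfold oaCost at h2
    linarith
  linarith

lemma branch_self_nonpos (G : LGraph Lv Le) : BranchLB G G ≤ 0 := by
  rw [branchLB_eq]
  have h := oaCost_le (cB_nonneg G G) (Equiv.refl (PadV G G))
  have h0 : ∑ x : PadV G G, cB G G x ((Equiv.refl (PadV G G)) x) = 0 := by
    apply Finset.sum_eq_zero
    intro x _
    rcases x with u | u <;> simp [cB, cllb, cdlb, padDeg]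
  rw [h0] at h
  exact h

lemma branch_le_listCost : ∀ (ops : List (Op Lv Le)) (G K : LGraph Lv Le), G.WF →
    applyList ops G = some K → BranchLB G K ≤ (ops.map (opCost 1 1 1 1)).sum
  | [], G, K, hG, h => by
    rw [applyList] at h
    cases h
    simpa using branch_self_nonpos G
  | o :: os, G, K, hG, h => by
    rw [applyList] at h
    obtain ⟨G₁, h1, h2⟩ := Option.bind_eq_some_iff.1 h
    have hrec := branch_le_listCost os G₁ K (wf_apply hG h1) h2
    have hstep := branch_le_step (K := K) hG h1
    simp only [List.map_cons, List.sum_cons]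
    linarith

lemma degree_iso {H' H : LGraph Lv Le} (hH' : H'.WF) (hH : H.WF)
    {φ : ℕ → ℕ} (hb : Set.BijOn φ ↑H'.verts ↑H.verts)
    (he : ∀ u ∈ H'.verts, ∀ v ∈ H'.verts, (s(u,v) ∈ H'.edges ↔ s(φ u, φ v) ∈ H.edges))
    {v : ℕ} (hv : v ∈ H'.verts) : H.degree (φ v) = H'.degree v := by
  unfold degree
  refine (Finset.card_bij (fun e _ => Sym2.map φ e) ?_ ?_ ?_).symm
  · intro e hee
    rw [Finset.mem_filter] at hee
    obtain ⟨w, rfl⟩ := Sym2.mem_iff_exists.1 hee.2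
    have hw : w ∈ H'.verts := hH'.2 _ hee.1 w (Sym2.mem_mk_right v w)
    rw [Finset.mem_filter, Sym2.map_pair_eq]
    exact ⟨(he v hv w hw).1 hee.1, Sym2.mem_mk_left _ _⟩
  · intro e₁ h₁ e₂ h₂ heq
    rw [Finset.mem_filter] at h₁ h₂
    obtain ⟨w₁, rfl⟩ := Sym2.mem_iff_exists.1 h₁.2
    obtain ⟨w₂, rfl⟩ := Sym2.mem_iff_exists.1 h₂.2
    have hw₁ : w₁ ∈ H'.verts := hH'.2 _ h₁.1 w₁ (Sym2.mem_mk_right v w₁)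
    have hw₂ : w₂ ∈ H'.verts := hH'.2 _ h₂.1 w₂ (Sym2.mem_mk_right v w₂)
    rw [Sym2.map_pair_eq, Sym2.map_pair_eq] at heq
    rcases Sym2.eq_iff.1 heq with ⟨-, hww⟩ | ⟨hvw, hwv⟩
    · rw [hb.injOn hw₁ hw₂ hww]
    · have h1 : w₂ = v := hb.injOn hw₂ hv hvw.symm
      have h2 : w₁ = v := hb.injOn hw₁ hv hwv
      rw [h1, h2]
  · intro e' he'
    rw [Finset.mem_filter] at he'
    obtain ⟨w', rfl⟩ := Sym2.mem_iff_exists.1 he'.2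
    have hw' : w' ∈ H.verts := hH.2 _ he'.1 w' (Sym2.mem_mk_right _ w')
    obtain ⟨w, hwmem, rfl⟩ := hb.surjOn hw'
    have hwmem' : w ∈ H'.verts := hwmem
    refine ⟨s(v, w), Finset.mem_filter.2 ⟨(he v hv w hwmem').2 he'.1, Sym2.mem_mk_left _ _⟩, ?_⟩
    rw [Sym2.map_pair_eq]

lemma branch_le_of_iso {G H' H : LGraph Lv Le} (hH' : H'.WF) (hH : H.WF) (hiso : Iso H' H) :
    BranchLB G H ≤ BranchLB G H' := by
  obtain ⟨φ, hb, hvl, hed, -⟩ := hiso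
  have hem : ∀ u : {x // x ∈ H'.verts}, φ u.1 ∈ H.verts := fun u => hb.1 u.2
  have hinj : Function.Injective (fun u : {x // x ∈ H'.verts} => (⟨φ u.1, hem u⟩ :
      {x // x ∈ H.verts})) := by
    intro u u' huu
    exact Subtype.ext (hb.injOn u.2 u'.2 (congrArg Subtype.val huu))
  have hsurj : Function.Surjective (fun u : {x // x ∈ H'.verts} => (⟨φ u.1, hem u⟩ :
      {x // x ∈ H.verts})) := by
    intro w
    obtain ⟨u, hu, hphi⟩ := hb.surjOn w.2
    exact ⟨⟨u, hu⟩, Subtype.ext hphi⟩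
  set e : {x // x ∈ H'.verts} ≃ {x // x ∈ H.verts} :=
    Equiv.ofBijective _ ⟨hinj, hsurj⟩ with hedef
  have happ : ∀ u : {x // x ∈ H'.verts}, (e u).1 = φ u.1 := fun u => rfl
  rw [branchLB_eq, branchLB_eq]
  unfold oaCost
  refine le_csInf ⟨_, ⟨Equiv.sumComm _ _, rfl⟩⟩ ?_
  rintro r ⟨g, rfl⟩
  set ee : PadV G H ≃ PadV G H' := Equiv.sumCongr (Equiv.refl _) e.symm with heedef
  set f : PadV G H ≃ PadV H G :=
    ee.trans (g.trans (Equiv.sumCongr e (Equiv.refl _))) with hfdef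
  have hle : oaCost G H (cB G H) ≤ ∑ x, cB G H x (f x) := oaCost_le (cB_nonneg G H) f
  have hsum : ∑ x, cB G H x (f x) = ∑ y, cB G H' y (g y) := by
    refine Fintype.sum_equiv ee _ _ ?_
    intro x
    have hfx : f x = (Equiv.sumCongr e (Equiv.refl _)) (g (ee x)) := rfl
    rw [hfx]
    rcases hgy : g (ee x) with w' | u'
    · rcases x with u | w
      · have hx : ee (Sum.inl u) = Sum.inl u := rfl
        rw [hx] at hgy ⊢
        show cB G H (Sum.inl u) (Sum.inl (e w')) = cB G H' (Sum.inl u) (Sum.inl w')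
        have hdeq : H.degree (e w').1 = H'.degree w'.1 := by
          rw [happ w']
          exact degree_iso hH' hH hb hed w'.2
        have hleq : H.vl (e w').1 = H'.vl w'.1 := by
          rw [happ w']
          exact hvl w'.1 w'.2
        simp only [cB, cllb, cdlb, padDeg, hdeq, hleq]
      · have hx : ee (Sum.inr w) = Sum.inr (e.symm w) := rfl
        rw [hx] at hgy ⊢
        show cB G H (Sum.inr w) (Sum.inl (e w')) = cB G H' (Sum.inr (e.symm w)) (Sum.inl w')
        have hdeq : H.degree (e w').1 = H'.degree w'.1 := by
          rw [happ w']
          exact degree_iso hH' hH hb hed w'.2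
        simp only [cB, cllb, cdlb, padDeg, hdeq]
    · rcases x with u | w
      · have hx : ee (Sum.inl u) = Sum.inl u := rfl
        rw [hx] at hgy ⊢
        rfl
      · have hx : ee (Sum.inr w) = Sum.inr (e.symm w) := rfl
        rw [hx] at hgy ⊢
        rfl
  rw [hsum] at hle
  exact hle
lemma applyList_append (l₁ l₂ : List (Op Lv Le)) (G : LGraph Lv Le) :
    applyList (l₁ ++ l₂) G = (applyList l₁ G).bind (applyList l₂) := by
  induction l₁ generalizing G with
  | nil => rfl
  | cons o os ih =>
    rw [List.cons_append, applyList, applyList]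
    cases hap : apply o G with
    | none => rfl
    | some G₁ => rw [Option.bind_some, Option.bind_some, ih]

lemma exists_clear_edges : ∀ (n : ℕ) (G : LGraph Lv Le), G.edges.card = n →
    ∃ (ops : List (Op Lv Le)) (G' : LGraph Lv Le), applyList ops G = some G' ∧ G'.verts = G.verts
      ∧ G'.edges = ∅ ∧ G'.vl = G.vl
  | 0, G, h => ⟨[], G, rfl, rfl, Finset.card_eq_zero.1 h, rfl⟩
  | n+1, G, h => by
    obtain ⟨e, he⟩ := Finset.card_pos.1 (by omega : 0 < G.edges.card)
    have happly : apply (Op.delE e) G = some ⟨G.verts, G.edges.erase e, G.vl, G.el⟩ := by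
      rw [apply, if_pos he]
    have hcard : (⟨G.verts, G.edges.erase e, G.vl, G.el⟩ : LGraph Lv Le).edges.card = n := by
      show (G.edges.erase e).card = n
      rw [Finset.card_erase_of_mem he, h]
      omega
    obtain ⟨ops, G', h1, h2, h3, h4⟩ := exists_clear_edges n _ hcard
    exact ⟨Op.delE e :: ops, G', by rw [applyList, happly, Option.bind_some]; exact h1,
      h2, h3, h4⟩

lemma exists_clear_verts : ∀ (n : ℕ) (G : LGraph Lv Le), G.verts.card = n → G.edges = ∅ →
    ∃ (ops : List (Op Lv Le)) (G' : LGraph Lv Le), applyList ops G = some G' ∧ G'.verts = ∅ ∧ G'.edges = ∅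
  | 0, G, h, hE => ⟨[], G, rfl, Finset.card_eq_zero.1 h, hE⟩
  | n+1, G, h, hE => by
    obtain ⟨v, hv⟩ := Finset.card_pos.1 (by omega : 0 < G.verts.card)
    have happly : apply (Op.delV v) G = some ⟨G.verts.erase v, G.edges, G.vl, G.el⟩ := by
      rw [apply, if_pos ⟨hv, by simp [hE]⟩]
    have hcard : (⟨G.verts.erase v, G.edges, G.vl, G.el⟩ : LGraph Lv Le).verts.card = n := by
      show (G.verts.erase v).card = n
      rw [Finset.card_erase_of_mem hv, h]
      omega
    obtain ⟨ops, G', h1, h2, h3⟩ := exists_clear_verts n _ hcard hE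
    exact ⟨Op.delV v :: ops, G', by rw [applyList, happly, Option.bind_some]; exact h1, h2, h3⟩

lemma exists_add_verts (lv : ℕ → Lv) (s : Finset ℕ) :
    ∀ (G : LGraph Lv Le), G.verts = ∅ → G.edges = ∅ →
    ∃ (ops : List (Op Lv Le)) (G' : LGraph Lv Le), applyList ops G = some G' ∧ G'.verts = s ∧ G'.edges = ∅
      ∧ ∀ v ∈ s, G'.vl v = lv v := by
  induction s using Finset.induction with
  | empty => exact fun G h1 h2 => ⟨[], G, rfl, h1, h2, by simp⟩
  | @insert a s ha ih =>
    intro G h1 h2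
    obtain ⟨ops, G', hap, hv, he, hl⟩ := ih G h1 h2
    have hnotin : a ∉ G'.verts := by rw [hv]; exact ha
    have happly : apply (Op.addV a (lv a)) G'
        = some ⟨insert a G'.verts, G'.edges, Function.update G'.vl a (lv a), G'.el⟩ := by
      rw [apply, if_neg hnotin]
    refine ⟨ops ++ [Op.addV a (lv a)], ⟨insert a G'.verts, G'.edges,
      Function.update G'.vl a (lv a), G'.el⟩, ?_, ?_, ?_, ?_⟩
    · rw [applyList_append, hap, Option.bind_some, applyList, happly, Option.bind_some,
        applyList]
    · show insert a G'.verts = insert a s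
      rw [hv]
    · exact he
    · intro v hvmem
      rcases Finset.mem_insert.1 hvmem with rfl | hvs
      · show Function.update G'.vl v (lv v) v = lv v
        rw [Function.update_self]
      · show Function.update G'.vl a (lv a) v = lv v
        rw [Function.update_of_ne (fun hh => ha (by rw [← hh]; exact hvs))]
        exact hl v hvs

lemma exists_add_edges (H : LGraph Lv Le) (hH : H.WF) (s : Finset (Sym2 ℕ)) :
    s ⊆ H.edges → ∀ (G : LGraph Lv Le), G.verts = H.verts → G.edges = ∅ →
    ∃ (ops : List (Op Lv Le)) (G' : LGraph Lv Le), applyList ops G = some G' ∧ G'.verts = H.verts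
      ∧ G'.edges = s ∧ G'.vl = G.vl ∧ ∀ e ∈ s, G'.el e = H.el e := by
  induction s using Finset.induction with
  | empty => exact fun _ G h1 h2 => ⟨[], G, rfl, h1, h2, rfl, by simp⟩
  | @insert e s he ih =>
    intro hsub G h1 h2
    obtain ⟨ops, G', hap, hv, hedge, hvl, hel⟩ :=
      ih (fun x hx => hsub (Finset.mem_insert_of_mem hx)) G h1 h2
    obtain ⟨a, b, rfl⟩ : ∃ a b, e = s(a, b) := by
      induction e using Sym2.ind with
      | _ a b => exact ⟨a, b, rfl⟩
    have heH : s(a, b) ∈ H.edges := hsub (Finset.mem_insert_self _ _)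
    have hain : a ∈ G'.verts := by rw [hv]; exact hH.2 _ heH a (Sym2.mem_mk_left a b)
    have hbin : b ∈ G'.verts := by rw [hv]; exact hH.2 _ heH b (Sym2.mem_mk_right a b)
    have hab : a ≠ b := fun hh => (hH.1 _ heH) (Sym2.mk_isDiag_iff.2 hh)
    have hnot : s(a, b) ∉ G'.edges := by rw [hedge]; exact he
    have happly : apply (Op.addE a b (H.el s(a, b))) G'
        = some ⟨G'.verts, insert s(a, b) G'.edges, G'.vl,
            Function.update G'.el s(a, b) (H.el s(a, b))⟩ := by
      rw [apply, if_pos ⟨hain, hbin, hab, hnot⟩]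
    refine ⟨ops ++ [Op.addE a b (H.el s(a, b))], ⟨G'.verts, insert s(a, b) G'.edges, G'.vl,
      Function.update G'.el s(a, b) (H.el s(a, b))⟩, ?_, ?_, ?_, ?_, ?_⟩
    · rw [applyList_append, hap, Option.bind_some, applyList, happly, Option.bind_some,
        applyList]
    · exact hv
    · show insert s(a, b) G'.edges = insert s(a, b) s
      rw [hedge]
    · exact hvl
    · intro e' he'
      rcases Finset.mem_insert.1 he' with rfl | hes
      · show Function.update G'.el s(a, b) (H.el s(a, b)) s(a, b) = H.el s(a, b)
        rw [Function.update_self]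
      · show Function.update G'.el s(a, b) (H.el s(a, b)) e' = H.el e'
        rw [Function.update_of_ne (fun hh => he (by rw [← hh]; exact hes))]
        exact hel e' hes

lemma exists_path (G H : LGraph Lv Le) (hH : H.WF) :
    ∃ (ops : List (Op Lv Le)) (H' : LGraph Lv Le), applyList ops G = some H' ∧ Iso H' H := by
  obtain ⟨ops₁, G₁, hap₁, hv₁, he₁, -⟩ := exists_clear_edges G.edges.card G rfl
  obtain ⟨ops₂, G₂, hap₂, hv₂, he₂⟩ := exists_clear_verts G₁.verts.card G₁ rfl he₁
  obtain ⟨ops₃, G₃, hap₃, hv₃, he₃, hl₃⟩ := exists_add_verts H.vl H.verts G₂ hv₂ he₂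
  obtain ⟨ops₄, G₄, hap₄, hv₄, he₄, hvl₄, hel₄⟩ :=
    exists_add_edges H hH H.edges (le_refl _) G₃ hv₃ he₃
  refine ⟨ops₁ ++ (ops₂ ++ (ops₃ ++ ops₄)), G₄, ?_, ?_⟩
  · rw [applyList_append, hap₁, Option.bind_some, applyList_append, hap₂, Option.bind_some,
      applyList_append, hap₃, Option.bind_some, hap₄]
  · refine ⟨id, ?_, ?_, ?_, ?_⟩
    · rw [hv₄]
      exact Set.bijOn_id _
    · intro v hvmem
      rw [hv₄] at hvmem
      rw [hvl₄]
      exact (hl₃ v hvmem).symm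
    · intro u _ v _
      rw [he₄]
      exact Iff.rfl
    · intro u _ v _ hmem
      rw [he₄] at hmem
      exact (hel₄ _ hmem).symm

lemma branch_le_ged (G H : LGraph Lv Le) (hG : G.WF) (hH : H.WF) :
    BranchLB G H ≤ GED 1 1 1 1 G H := by
  unfold GED
  refine le_csInf ?_ ?_
  · obtain ⟨ops, H', h1, h2⟩ := exists_path G H hH
    exact ⟨_, ops, H', h1, h2, rfl⟩
  · rintro r ⟨ops, H', happly, hiso, rfl⟩
    exact le_trans (branch_le_of_iso (wf_applyList ops G H' hG happly) hH hiso)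
      (branch_le_listCost ops G H' hG happly)

/-- For any two vertex-labeled graphs `G` and `H` with uniform unit edit
costs, `SLF(G,H) ≤ CLB(G,H) ≤ BranchLB(G,H) ≤ GED(G,H)`. -/
theorem slf_le_clb_le_branch_le_ged {Lv Le : Type}
    (G H : LGraph Lv Le) (hG : G.WF) (hH : H.WF) :
    SLF G H ≤ CLB 1 1 1 G H ∧ CLB 1 1 1 G H ≤ BranchLB G H ∧
      BranchLB G H ≤ GED 1 1 1 1 G H := by
  refine ⟨?_, clb_le_branch G H, branch_le_ged G H hG hH⟩
  unfold SLF CLB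
  exact add_le_add (llb_lower G H) (dlb_lower G H hG hH)

end LGraph
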